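/- Let A be an N×N real matrix with nonnegative off-diagonal entries and zero column sums, and let τ > 0. Then the implicit Euler step matrix (I − τA)^{-1} is nonexpansive in the ℓ¹ norm: for every u ∈ ℝ^N, ∑_i |((I − τA)^{-1} u)_i| ≤ ∑_i |u_i|. In particular the implicit Euler scheme is unconditionally stable: the ℓ¹ norms of the iterates u^{k+1} = (I − τA)^{-1} u^k are nonincreasing for every time step τ > 0. -/
import Mathlib

open Finset

lemma l1_expand_aux {N : ℕ} (B : Matrix (Fin N) (Fin N) ℝ)
    (hoffB : ∀ i j, i ≠ j → B i j ≤ 0) (hcol : ∀ j, ∑ i, B i j = 1)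
    (v : Fin N → ℝ) : ∑ j, |v j| ≤ ∑ i, |B.mulVec v i| := by
  set s : Fin N → ℝ := fun i => Real.sign (v i) with hs
  have hsabs : ∀ i, |s i| ≤ 1 := by
    intro i
    rcases lt_trichotomy (v i) 0 with h | h | h
    · simp [hs, Real.sign_of_neg h]
    · simp [hs, h]
    · simp [hs, Real.sign_of_pos h]
  have hsv : ∀ i, s i * v i = |v i| := by
    intro i
    rcases lt_trichotomy (v i) 0 with h | h | h
    · simp [hs, Real.sign_of_neg h, abs_of_neg h]
    · simp [hs, h]
    · simp [hs, Real.sign_of_pos h, abs_of_pos h]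
  have step1 : ∑ j, |v j| ≤ ∑ j, ∑ i, s i * B i j * v j := by
    apply Finset.sum_le_sum
    intro j _
    have : |v j| = ∑ i, |v j| * B i j := by
      rw [← Finset.mul_sum, hcol, mul_one]
    rw [this]
    apply Finset.sum_le_sum
    intro i _
    by_cases h : i = j
    · subst h
      exact le_of_eq (by rw [← hsv i]; ring)
    · have h1 : s i * v j ≤ |v j| := by
        calc s i * v j ≤ |s i * v j| := le_abs_self _
          _ = |s i| * |v j| := abs_mul _ _
          _ ≤ 1 * |v j| := by
              exact mul_le_mul_of_nonneg_right (hsabs i) (abs_nonneg _)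
          _ = |v j| := one_mul _
      have h2 := mul_le_mul_of_nonpos_left h1 (hoffB i j h)
      nlinarith [h2]
  have step2 : ∑ j, ∑ i, s i * B i j * v j = ∑ i, s i * B.mulVec v i := by
    rw [Finset.sum_comm]
    apply Finset.sum_congr rfl
    intro i _
    simp only [Matrix.mulVec, dotProduct, Finset.mul_sum]
    apply Finset.sum_congr rfl
    intro j _
    ring
  have step3 : ∑ i, s i * B.mulVec v i ≤ ∑ i, |B.mulVec v i| := by
    apply Finset.sum_le_sum
    intro i _
    calc s i * B.mulVec v i ≤ |s i * B.mulVec v i| := le_abs_self _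
      _ = |s i| * |B.mulVec v i| := abs_mul _ _
      _ ≤ 1 * |B.mulVec v i| := mul_le_mul_of_nonneg_right (hsabs i) (abs_nonneg _)
      _ = _ := one_mul _
  linarith [step1, step2.le, step3]

theorem implicit_euler_l1_nonexpansive (N : ℕ) (A : Matrix (Fin N) (Fin N) ℝ)
    (hoff : ∀ i j, i ≠ j → 0 ≤ A i j) (hsum : ∀ j, ∑ i, A i j = 0)
    (τ : ℝ) (hτ : 0 < τ) :
    (∀ u : Fin N → ℝ,
      ∑ i, |((1 : Matrix (Fin N) (Fin N) ℝ) - τ • A)⁻¹.mulVec u i| ≤ ∑ i, |u i|) ∧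
    (∀ f : Fin N → ℝ, ∀ k : ℕ,
      ∑ i, ((((1 : Matrix (Fin N) (Fin N) ℝ) - τ • A)⁻¹ ^ (k + 1)).mulVec f i |> abs)
        ≤ ∑ i, ((((1 : Matrix (Fin N) (Fin N) ℝ) - τ • A)⁻¹ ^ k).mulVec f i |> abs)) := by
  set B : Matrix (Fin N) (Fin N) ℝ := (1 : Matrix (Fin N) (Fin N) ℝ) - τ • A with hB
  have hoffB : ∀ i j, i ≠ j → B i j ≤ 0 := by
    intro i j h
    have : B i j = -(τ * A i j) := by
      simp [hB, Matrix.sub_apply, Matrix.one_apply_ne h, Matrix.smul_apply]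
    rw [this]
    have := mul_nonneg hτ.le (hoff i j h)
    linarith
  have hcol : ∀ j, ∑ i, B i j = 1 := by
    intro j
    simp only [hB, Matrix.sub_apply, Matrix.smul_apply, smul_eq_mul,
      Finset.sum_sub_distrib, ← Finset.mul_sum, hsum, mul_zero, sub_zero]
    simp [Matrix.one_apply]
  have key := l1_expand_aux B hoffB hcol
  have hinj : Function.Injective B.mulVec := by
    intro x y hxy
    have : ∀ i, |(x - y) i| = 0 := by
      intro i
      have h0 : B.mulVec (x - y) = 0 := by
        rw [Matrix.mulVec_sub, hxy, sub_self]
      have := key (x - y)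
      rw [h0] at this
      simp only [Pi.zero_apply, abs_zero, Finset.sum_const_zero] at this
      have hnn : (0:ℝ) ≤ ∑ j, |(x - y) j| :=
        Finset.sum_nonneg fun j _ => abs_nonneg _
      have hall : ∑ j, |(x - y) j| = 0 := le_antisymm this hnn
      have := (Finset.sum_eq_zero_iff_of_nonneg
        (fun j _ => abs_nonneg ((x - y) j))).1 hall i (Finset.mem_univ i)
      exact this
    funext i
    have := this i
    have : (x - y) i = 0 := abs_eq_zero.1 this
    simpa [sub_eq_zero] using this
  have hunit : IsUnit B := Matrix.mulVec_injective_iff_isUnit.1 hinj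
  have hBinv : B * B⁻¹ = 1 := Matrix.mul_nonsing_inv B (Matrix.isUnit_iff_isUnit_det B |>.1 hunit)
  have part1 : ∀ u : Fin N → ℝ, ∑ i, |B⁻¹.mulVec u i| ≤ ∑ i, |u i| := by
    intro u
    have h1 : B.mulVec (B⁻¹.mulVec u) = u := by
      rw [Matrix.mulVec_mulVec, hBinv, Matrix.one_mulVec]
    have := key (B⁻¹.mulVec u)
    rwa [h1] at this
  refine ⟨part1, ?_⟩
  intro f k
  have : (B⁻¹ ^ (k + 1)).mulVec f = B⁻¹.mulVec ((B⁻¹ ^ k).mulVec f) := by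
    rw [Matrix.mulVec_mulVec, pow_succ']
  rw [this]
  exact part1 _
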